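/- arXiv:0904.3994 — 2 statements merged into one kernel-verified Lean document; each statement's English description precedes it below -/
import Mathlib

section
/- Let A be an n×m complex matrix with unit-norm columns, n < m. Then the coherence μ(A) = max_{i≠j} |⟨aᵢ, aⱼ⟩| satisfies the Welch lower bound μ(A) ≥ √((m - n)/(n(m - 1))). -/
open Matrix Finset

private lemma sum_swap4 {α β γ δ M : Type*} [AddCommMonoid M]
    [Fintype α] [Fintype β] [Fintype γ] [Fintype δ] (f : α → β → γ → δ → M) :
    ∑ i, ∑ j, ∑ k, ∑ l, f i j k l = ∑ k, ∑ l, ∑ j, ∑ i, f i j k l := by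
  calc ∑ i, ∑ j, ∑ k, ∑ l, f i j k l
      = ∑ j, ∑ i, ∑ k, ∑ l, f i j k l := Finset.sum_comm
    _ = ∑ j, ∑ k, ∑ i, ∑ l, f i j k l :=
        Finset.sum_congr rfl fun _ _ => Finset.sum_comm
    _ = ∑ k, ∑ j, ∑ i, ∑ l, f i j k l := Finset.sum_comm
    _ = ∑ k, ∑ j, ∑ l, ∑ i, f i j k l :=
        Finset.sum_congr rfl fun _ _ => Finset.sum_congr rfl fun _ _ => Finset.sum_comm
    _ = ∑ k, ∑ l, ∑ j, ∑ i, f i j k l :=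
        Finset.sum_congr rfl fun _ _ => Finset.sum_comm

theorem welch_bound (n m : ℕ) (hn : 0 < n) (hnm : n < m)
    (A : Matrix (Fin n) (Fin m) ℂ)
    (hcols : ∀ j, ∑ i, ‖A i j‖ ^ 2 = 1)
    (μ : ℝ)
    (hμ : ∀ i j : Fin m, i ≠ j → ‖∑ l, starRingEnd ℂ (A l i) * A l j‖ ≤ μ) :
    μ ≥ Real.sqrt ((m - n) / (n * (m - 1))) := by
  have hm2 : 2 ≤ m := by omega
  set g : Fin m → Fin m → ℂ := fun i j => ∑ l, starRingEnd ℂ (A l i) * A l j with hg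
  set B : Fin n → Fin n → ℂ := fun k l => ∑ j, A k j * starRingEnd ℂ (A l j) with hB
  have hμ0 : 0 ≤ μ := by
    have h01 : (⟨0, by omega⟩ : Fin m) ≠ ⟨1, by omega⟩ := by
      simp [Fin.ext_iff]
    exact le_trans (norm_nonneg _) (hμ _ _ h01)
  have key : ∑ i, ∑ j, g i j * starRingEnd ℂ (g i j)
      = ∑ k, ∑ l, B k l * starRingEnd ℂ (B k l) := by
    have lhs : ∑ i, ∑ j, g i j * starRingEnd ℂ (g i j)
        = ∑ i, ∑ j, ∑ k, ∑ l,
            (starRingEnd ℂ (A k i) * A k j) * (A l i * starRingEnd ℂ (A l j)) := by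
      refine Finset.sum_congr rfl fun i _ => Finset.sum_congr rfl fun j _ => ?_
      rw [hg]
      simp only [map_sum, _root_.map_mul, Complex.conj_conj, Finset.sum_mul_sum]
    have rhs : ∑ k, ∑ l, B k l * starRingEnd ℂ (B k l)
        = ∑ k, ∑ l, ∑ j, ∑ i,
            (starRingEnd ℂ (A k i) * A k j) * (A l i * starRingEnd ℂ (A l j)) := by
      refine Finset.sum_congr rfl fun k _ => Finset.sum_congr rfl fun l _ => ?_
      rw [hB]
      simp only [map_sum, _root_.map_mul, Complex.conj_conj, Finset.sum_mul_sum]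
      exact Finset.sum_congr rfl fun j _ => Finset.sum_congr rfl fun i _ => by ring
    rw [lhs, rhs, sum_swap4]
  -- row norms
  set b : Fin n → ℝ := fun k => ∑ j, ‖A k j‖ ^ 2 with hb
  have hBkk : ∀ k, B k k = ((b k : ℝ) : ℂ) := by
    intro k
    rw [hB, hb]
    push_cast
    simp only [Complex.mul_conj]
    exact Finset.sum_congr rfl fun j _ => by
      norm_cast
      exact (Complex.sq_norm _).symm
  have hsumb : ∑ k, b k = m := by
    rw [hb]
    rw [Finset.sum_comm]
    simp [hcols]
  have h1 : (m : ℝ) ^ 2 ≤ n * ∑ k, b k ^ 2 := by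
    have := sq_sum_le_card_mul_sum_sq (s := (univ : Finset (Fin n))) (f := b)
    simpa [hsumb] using this
  have h2 : ∑ k, b k ^ 2 ≤ ∑ k, ∑ l, Complex.normSq (B k l) := by
    refine Finset.sum_le_sum fun k _ => ?_
    have hdiag : b k ^ 2 = Complex.normSq (B k k) := by
      rw [hBkk k, Complex.normSq_ofReal, sq]
    rw [hdiag]
    exact Finset.single_le_sum (fun l _ => Complex.normSq_nonneg _) (Finset.mem_univ k)
  have h3 : ∑ k, ∑ l, Complex.normSq (B k l) = ∑ i, ∑ j, Complex.normSq (g i j) := by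
    have hc : ((∑ k, ∑ l, Complex.normSq (B k l) : ℝ) : ℂ)
        = ((∑ i, ∑ j, Complex.normSq (g i j) : ℝ) : ℂ) := by
      push_cast
      simp only [← Complex.mul_conj]
      exact key.symm
    exact_mod_cast hc
  have hgii : ∀ i, g i i = 1 := by
    intro i
    have hr : ∑ l, Complex.normSq (A l i) = 1 := by
      rw [← hcols i]
      exact Finset.sum_congr rfl fun l _ => (Complex.sq_norm _).symm
    have he : g i i = ∑ l, starRingEnd ℂ (A l i) * A l i := rfl
    have he2 : ∑ l, starRingEnd ℂ (A l i) * A l i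
        = ((∑ l, Complex.normSq (A l i) : ℝ) : ℂ) := by
      push_cast
      exact Finset.sum_congr rfl fun l _ => by rw [mul_comm, Complex.mul_conj]
    rw [he, he2, hr, Complex.ofReal_one]
  have h4 : ∑ i, ∑ j, Complex.normSq (g i j) ≤ m * (1 + (m - 1) * μ ^ 2) := by
    have hrow : ∀ i : Fin m, ∑ j, Complex.normSq (g i j) ≤ 1 + (m - 1) * μ ^ 2 := by
      intro i
      rw [← Finset.add_sum_erase _ _ (Finset.mem_univ i), hgii i]
      simp only [Complex.normSq_one]
      refine add_le_add_right ?_ 1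
      calc ∑ j ∈ univ.erase i, Complex.normSq (g i j)
          ≤ ∑ _j ∈ univ.erase i, μ ^ 2 := by
            refine Finset.sum_le_sum fun j hj => ?_
            rw [← Complex.sq_norm]
            have hji : i ≠ j := fun h => (Finset.mem_erase.mp hj).1 h.symm
            exact pow_le_pow_left₀ (norm_nonneg _) (hμ i j hji) 2
        _ = (m - 1) * μ ^ 2 := by
            rw [Finset.sum_const, Finset.card_erase_of_mem (Finset.mem_univ i),
              Finset.card_univ, Fintype.card_fin, nsmul_eq_mul,
              Nat.cast_sub (by omega : 1 ≤ m), Nat.cast_one]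
    calc ∑ i, ∑ j, Complex.normSq (g i j) ≤ ∑ _i : Fin m, (1 + (m - 1) * μ ^ 2) :=
          Finset.sum_le_sum fun i _ => hrow i
      _ = m * (1 + (m - 1) * μ ^ 2) := by rw [Finset.sum_const, Finset.card_univ, Fintype.card_fin, nsmul_eq_mul]
  -- combine
  have hmain : (m : ℝ) ^ 2 ≤ n * (m * (1 + (m - 1) * μ ^ 2)) := by
    calc (m : ℝ) ^ 2 ≤ n * ∑ k, b k ^ 2 := h1
      _ ≤ n * (m * (1 + (m - 1) * μ ^ 2)) := by
          refine mul_le_mul_of_nonneg_left ?_ (Nat.cast_nonneg n)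
          exact le_trans h2 (le_of_le_of_eq (le_of_eq h3) (by ring_nf) |>.trans h4)
  -- finish
  have hN : (1 : ℝ) ≤ n := by exact_mod_cast hn
  have hM : (2 : ℝ) ≤ m := by exact_mod_cast hm2
  have hNM : (n : ℝ) + 1 ≤ m := by exact_mod_cast hnm
  have hsq : ((m : ℝ) - n) / (n * (m - 1)) ≤ μ ^ 2 := by
    rw [div_le_iff₀ (by nlinarith : (0 : ℝ) < n * ((m : ℝ) - 1))]
    nlinarith [sq_nonneg μ]
  calc Real.sqrt ((m - n) / (n * (m - 1))) ≤ Real.sqrt (μ ^ 2) := Real.sqrt_le_sqrt hsq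
    _ = μ := Real.sqrt_sq hμ0
end

section
/- Let A be an n×m complex matrix and let A^{RM} be the n²×m matrix with entries A^{RM}_{(i,k),j} = A_{ij}·A_{kj} (indexing rows by pairs (i,k) ∈ {1..n}²). If the columns of A are unit vectors, then the column inner products satisfy ⟨a^{RM}_i, a^{RM}_j⟩ = ⟨aᵢ, aⱼ⟩², and hence the coherence satisfies μ(A^{RM}) = μ(A)². -/
open Matrix Finset

theorem rm_coherence_square (n m : ℕ) (hm : 2 ≤ m)
    (A : Matrix (Fin n) (Fin m) ℂ)
    (ARM : Matrix (Fin n × Fin n) (Fin m) ℂ)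
    (hARM : ∀ ik : Fin n × Fin n, ∀ j, ARM ik j = A ik.1 j * A ik.2 j)
    (hcols : ∀ j, ∑ i, ‖A i j‖ ^ 2 = 1)
    (hpairs : (Finset.univ.filter fun p : Fin m × Fin m => p.1 ≠ p.2).Nonempty) :
    (∀ i j : Fin m,
      (∑ l, starRingEnd ℂ (ARM l i) * ARM l j) =
        (∑ l, starRingEnd ℂ (A l i) * A l j) ^ 2) ∧
    ((Finset.univ.filter fun p : Fin m × Fin m => p.1 ≠ p.2).sup' hpairs
        (fun p => ‖∑ l, starRingEnd ℂ (ARM l p.1) * ARM l p.2‖)) =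
      ((Finset.univ.filter fun p : Fin m × Fin m => p.1 ≠ p.2).sup' hpairs
        (fun p => ‖∑ l, starRingEnd ℂ (A l p.1) * A l p.2‖)) ^ 2 := by
  have key : ∀ i j : Fin m,
      (∑ l, starRingEnd ℂ (ARM l i) * ARM l j) =
        (∑ l, starRingEnd ℂ (A l i) * A l j) ^ 2 := by
    intro i j
    simp only [hARM, _root_.map_mul]
    rw [sq, Finset.sum_mul_sum, Fintype.sum_prod_type]
    apply Finset.sum_congr rfl; intro p _
    apply Finset.sum_congr rfl; intro q _
    ring
  refine ⟨key, ?_⟩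
  set S := (Finset.univ.filter fun p : Fin m × Fin m => p.1 ≠ p.2) with hS
  set g : Fin m × Fin m → ℝ := fun p => ‖∑ l, starRingEnd ℂ (A l p.1) * A l p.2‖
    with hg
  have habs : ∀ p : Fin m × Fin m,
      ‖∑ l, starRingEnd ℂ (ARM l p.1) * ARM l p.2‖ = g p ^ 2 := by
    intro p
    rw [key p.1 p.2, norm_pow]
  have hgnn : ∀ p, 0 ≤ g p := fun p => norm_nonneg _
  apply le_antisymm
  · apply Finset.sup'_le
    intro p hp
    rw [habs]
    exact pow_le_pow_left₀ (hgnn p) (Finset.le_sup' g hp) 2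
  · obtain ⟨p, hp, hps⟩ := Finset.exists_mem_eq_sup' hpairs g
    have h2 := Finset.le_sup' (f := fun q : Fin m × Fin m =>
      ‖∑ l, starRingEnd ℂ (ARM l q.1) * ARM l q.2‖) hp
    rw [habs] at h2
    show S.sup' hpairs g ^ 2 ≤ S.sup' hpairs fun q : Fin m × Fin m =>
      ‖∑ l, starRingEnd ℂ (ARM l q.1) * ARM l q.2‖
    rw [hps]
    exact h2
end
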